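/- arXiv:1706.09185 — 4 statements merged into one kernel-verified Lean document; each statement's English description precedes it below -/
import Mathlib

section
/- In a caterpillar with leaves u_1,...,u_s as above, if x_{i-1} + y_{i-1} > x_i + y_i, then for every j < i-1, d(u_j, u_{i-1}) > d(u_j, u_i), and for every j > i, d(u_j, u_{i-1}) > d(u_j, u_i); consequently any set P containing u_i with pairwise distances at least λ can replace u_i with u_{i-1} while preserving pairwise distances at least λ, provided u_{i-1} ∉ P. -/
/-- In the caterpillar with `d j k = |x j - x k| + y j + y k`, if
`x (i-1) + y (i-1) > x i + y i` then `u_{i-1}` is strictly farther than `u_i`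
from every `u_j` with `j < i-1` or `j > i`; consequently any set `P` with
pairwise distances at least `λ` containing `i` but not `i-1` can replace `i`
by `i-1` while keeping all pairwise distances at least `λ`. -/
theorem stmt_5 (lam : ℝ) (hlam : 0 < lam) (x y : ℕ → ℝ)
    (hx : StrictMono x) (hy0 : ∀ j, 0 ≤ y j) (hy : ∀ j, y j < lam / 2)
    (d : ℕ → ℕ → ℝ) (hd : ∀ j k, d j k = |x j - x k| + y j + y k)
    (i : ℕ) (hi : 1 ≤ i) (h : x i + y i < x (i - 1) + y (i - 1)) :
    (∀ j, j < i - 1 → d j i < d j (i - 1)) ∧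
    (∀ j, i < j → d j i < d j (i - 1)) ∧
    (∀ P : Set ℕ, i ∈ P → (i - 1) ∉ P →
      (∀ a ∈ P, ∀ b ∈ P, a ≠ b → lam ≤ d a b) →
      (∀ a ∈ (P \ {i}) ∪ {i - 1}, ∀ b ∈ (P \ {i}) ∪ {i - 1}, a ≠ b → lam ≤ d a b)) := by
  have hi1 : i - 1 < i := Nat.sub_lt hi one_pos
  have key1 : ∀ j, j < i - 1 → d j i < d j (i - 1) := by
    intro j hj
    rw [hd, hd]
    have h1 : x j < x (i - 1) := hx hj
    have h2 : x j < x i := hx (lt_trans hj hi1)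
    rw [abs_of_neg (by linarith), abs_of_neg (by linarith)]
    linarith
  have key2 : ∀ j, i < j → d j i < d j (i - 1) := by
    intro j hj
    rw [hd, hd]
    have h1 : x (i - 1) < x j := hx (lt_trans hi1 hj)
    have h2 : x i < x j := hx hj
    have h3 : x (i - 1) < x i := hx hi1
    rw [abs_of_pos (by linarith), abs_of_pos (by linarith)]
    linarith
  refine ⟨key1, key2, ?_⟩
  intro P hiP hi1P hP a ha b hb hab
  have dsymm : ∀ j k, d j k = d k j := by
    intro j k; rw [hd, hd, abs_sub_comm]; ring
  have key : ∀ a ∈ P, a ≠ i → lam ≤ d a (i - 1) := by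
    intro a haP hai
    have hbase := hP a haP i hiP hai
    have hane : a ≠ i - 1 := fun hh => hi1P (hh ▸ haP)
    rcases lt_trichotomy a (i - 1) with hlt | heq | hgt
    · linarith [key1 a hlt]
    · exact absurd heq hane
    · have : i < a := by omega
      linarith [key2 a this]
  simp only [Set.mem_union, Set.mem_diff, Set.mem_singleton_iff] at ha hb
  rcases ha with ⟨haP, hai⟩ | ha1
  · rcases hb with ⟨hbP, hbi⟩ | hb1
    · exact hP a haP b hbP hab
    · subst hb1; exact key a haP hai
  · subst ha1
    rcases hb with ⟨hbP, hbi⟩ | hb1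
    · rw [dsymm]; exact key b hbP hbi
    · exact absurd hb1.symm hab
end

section
/- For all positive reals x ≤ y, it holds that 2x·log(2x) + 2y·log y + x·log(2y/x) ≤ 2(x+y)·log(x+y). -/
open Real

lemma key_t (t : ℝ) (ht : 0 < t) (ht1 : t ≤ 1) :
    3 * t * Real.log 2 + t * Real.log t ≤ (2 * t + 2) * Real.log (1 + t) := by
  set s := Real.sqrt (1 + t) with hsdef
  have hs2 : s ^ 2 = 1 + t := Real.sq_sqrt (by linarith)
  have hsnn : 0 ≤ s := Real.sqrt_nonneg _
  have hs1 : 1 ≤ s := by nlinarith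
  have hs0 : 0 < s := by linarith
  have hlog1 : Real.log (1 + t) = 2 * Real.log s := by
    rw [← hs2, Real.log_pow]; push_cast; ring
  have hlogs : 1 - 1 / s ≤ Real.log s := by
    have h := Real.log_le_sub_one_of_pos (show (0:ℝ) < s⁻¹ by positivity)
    rw [Real.log_inv] at h
    have : s⁻¹ = 1 / s := by ring
    linarith [h, this ▸ h]
  have hslogs : s - 1 ≤ s * Real.log s := by
    have := mul_le_mul_of_nonneg_left hlogs hs0.le
    have h1 : s * (1 - 1 / s) = s - 1 := by field_simp
    linarith
  have hlt : Real.log t ≤ t - 1 := Real.log_le_sub_one_of_pos ht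
  have hL : Real.log 2 < 0.6931471808 := Real.log_two_lt_d9
  have hA : 0 ≤ Real.log (1 + t) := Real.log_nonneg (by linarith)
  have hsA : 2 * s - 2 ≤ s * Real.log (1 + t) := by
    rw [hlog1]; linarith
  -- goal: 3 t L + t log t ≤ (2t+2) log(1+t), t = s^2 - 1
  have hsle : s ^ 2 ≤ 2 := by linarith
  nlinarith [mul_le_mul_of_nonneg_left hsA hs0.le,
    mul_nonneg (mul_nonneg (sub_nonneg.2 hs1) hs0.le) (sub_nonneg.2 hsle),
    mul_nonneg (sub_nonneg.2 hs1) (sub_nonneg.2 hsle),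
    mul_nonneg (sub_nonneg.2 hs1) hs0.le,
    sq_nonneg (s - 1), hs2, hL, hlt, hA]

lemma main_log (x y : ℝ) (hx : 0 < x) (hxy : x ≤ y) :
    3 * x * Real.log 2 + x * Real.log x + (x + 2 * y) * Real.log y ≤
      2 * (x + y) * Real.log (x + y) := by
  have hy : 0 < y := lt_of_lt_of_le hx hxy
  set t := x / y with htdef
  have ht : 0 < t := div_pos hx hy
  have ht1 : t ≤ 1 := (div_le_one hy).2 hxy
  have hxt : x = t * y := by rw [htdef]; field_simp
  have hlx : Real.log x = Real.log t + Real.log y := by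
    rw [hxt, Real.log_mul (ne_of_gt ht) (ne_of_gt hy)]
  have hlxy : Real.log (x + y) = Real.log (1 + t) + Real.log y := by
    rw [show x + y = (1 + t) * y by rw [hxt]; ring,
      Real.log_mul (by linarith) (ne_of_gt hy)]
  have hkey := key_t t ht ht1
  have := mul_le_mul_of_nonneg_left hkey hy.le
  rw [hlx, hlxy, hxt]
  nlinarith [this]

/-- For all positive reals `x ≤ y`,
`2x·log(2x) + 2y·log y + x·log(2y/x) ≤ 2(x+y)·log(x+y)` (log base 2). -/
theorem stmt_9 (x y : ℝ) (hx : 0 < x) (hxy : x ≤ y) :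
    2 * x * logb 2 (2 * x) + 2 * y * logb 2 y + x * logb 2 (2 * y / x) ≤
      2 * (x + y) * logb 2 (x + y) := by
  have hy : 0 < y := lt_of_lt_of_le hx hxy
  have hl2 : (0:ℝ) < Real.log 2 := Real.log_pos one_lt_two
  have h2x : Real.log (2 * x) = Real.log 2 + Real.log x :=
    Real.log_mul two_ne_zero (ne_of_gt hx)
  have h2yx : Real.log (2 * y / x) = Real.log 2 + Real.log y - Real.log x := by
    rw [Real.log_div (by positivity) (ne_of_gt hx),
      Real.log_mul two_ne_zero (ne_of_gt hy)]
  have key := main_log x y hx hxy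
  calc 2 * x * logb 2 (2 * x) + 2 * y * logb 2 y + x * logb 2 (2 * y / x)
      = (2 * x * Real.log (2 * x) + 2 * y * Real.log y + x * Real.log (2 * y / x)) / Real.log 2 := by
        simp only [Real.logb]; ring
    _ ≤ (2 * (x + y) * Real.log (x + y)) / Real.log 2 := by
        gcongr
        rw [h2x, h2yx]; nlinarith [key]
    _ = 2 * (x + y) * logb 2 (x + y) := by simp only [Real.logb]; ring
end

section
/- Define S(n) recursively on binary trees: for a leaf S = 0; for a unary node with subtree of size n−1, S(n) = S(n−1); for a binary node with subtrees of sizes x ≤ y (so n = x+y+1), S(n) = S(x) + S(y) + c·x·log(2y/x). Then S(n) ≤ 2c·n·log n for all n ≥ 2. -/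
open Real

/-- Binary trees: leaves, unary nodes, and binary nodes. -/
inductive BT where
  | leaf : BT
  | node1 (t : BT) : BT
  | node2 (l r : BT) : BT

/-- Number of nodes of a binary tree. -/
def BT.size : BT → ℕ
  | BT.leaf => 1
  | BT.node1 t => t.size + 1
  | BT.node2 l r => l.size + r.size + 1

/-- Total cost `S`: a leaf costs `0`; a unary node costs the cost of its subtree;
a binary node with subtree sizes `x ≤ y` costs the two subtree costs plus
`c·x·log(2y/x)` (log base 2). -/
noncomputable def BT.cost (c : ℝ) : BT → ℝ
  | BT.leaf => 0
  | BT.node1 t => t.cost c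
  | BT.node2 l r =>
      l.cost c + r.cost c +
        c * (min l.size r.size : ℝ) *
          logb 2 (2 * (max l.size r.size : ℝ) / (min l.size r.size : ℝ))

lemma BT.one_le_size : ∀ t : BT, 1 ≤ t.size
  | BT.leaf => le_refl 1
  | BT.node1 _ => by simp [BT.size]
  | BT.node2 _ _ => by simp [BT.size]

lemma key_ineq (c : ℝ) (hc : 0 < c) (x y : ℝ) (hx : 1 ≤ x) (hxy : x ≤ y)
    (A B : ℝ) (hA : A ≤ 2 * c * x * logb 2 x) (hB : B ≤ 2 * c * y * logb 2 y) :
    A + B + c * x * logb 2 (2 * y / x) ≤ 2 * c * (x + y + 1) * logb 2 (x + y + 1) := by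
  have hy : (1:ℝ) ≤ y := hx.trans hxy
  have hx0 : (0:ℝ) < x := by linarith
  have hy0 : (0:ℝ) < y := by linarith
  have hn1 : (1:ℝ) ≤ x + y + 1 := by linarith
  have hn0 : (0:ℝ) < x + y + 1 := by linarith
  set Lx := logb 2 x with hLx
  set Ly := logb 2 y with hLy
  set Ln := logb 2 (x + y + 1) with hLn
  have hb : (1:ℝ) < 2 := one_lt_two
  have hlog : logb 2 (2 * y / x) = 1 + Ly - Lx := by
    rw [logb_div (by positivity) (by positivity),
      logb_mul (by norm_num) (by positivity), logb_self_eq_one hb]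
  have hyn : Ly ≤ Ln := logb_le_logb_of_le hb hy0 (by linarith)
  have hLn0 : (0:ℝ) ≤ Ln := logb_nonneg hb hn1
  have h2 : Lx + Ly + 1 ≤ 2 * Ln := by
    have hle : logb 2 (2 * x * y) ≤ logb 2 ((x + y + 1) ^ 2) := by
      apply logb_le_logb_of_le hb (by positivity)
      nlinarith [sq_nonneg (x - y), sq_nonneg (x + y)]
    rw [logb_mul (by positivity) (by positivity),
      logb_mul (by norm_num) (by positivity), logb_self_eq_one hb,
      logb_pow] at hle
    push_cast at hle
    linarith
  rw [hlog]
  nlinarith [mul_le_mul_of_nonneg_left hyn (by positivity : (0:ℝ) ≤ 2 * c * y),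
    mul_le_mul_of_nonneg_left h2 (by positivity : (0:ℝ) ≤ c * x),
    mul_nonneg (by positivity : (0:ℝ) ≤ 2 * c) hLn0]

lemma cost_le (c : ℝ) (hc : 0 < c) :
    ∀ t : BT, t.cost c ≤ 2 * c * (t.size : ℝ) * logb 2 (t.size : ℝ) := by
  intro t
  induction t with
  | leaf => simp [BT.cost, BT.size]
  | node1 t ih =>
      have h1 : (1:ℝ) ≤ (t.size : ℝ) := by exact_mod_cast t.one_le_size
      have hmono : logb 2 (t.size : ℝ) ≤ logb 2 ((t.size : ℝ) + 1) :=
        logb_le_logb_of_le one_lt_two (by linarith) (by linarith)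
      have h0 : (0:ℝ) ≤ logb 2 (t.size : ℝ) := logb_nonneg one_lt_two h1
      simp only [BT.cost, BT.size]
      have h0' : (0:ℝ) ≤ logb 2 ((t.size : ℝ) + 1) := h0.trans hmono
      push_cast
      nlinarith [mul_le_mul_of_nonneg_left hmono
        (by positivity : (0:ℝ) ≤ 2 * c * (t.size : ℝ)),
        mul_nonneg (by positivity : (0:ℝ) ≤ 2 * c) h0']
  | node2 l r ihl ihr =>
      have hl1 : (1:ℝ) ≤ (l.size : ℝ) := by exact_mod_cast l.one_le_size
      have hr1 : (1:ℝ) ≤ (r.size : ℝ) := by exact_mod_cast r.one_le_size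
      simp only [BT.cost, BT.size]
      push_cast
      rcases le_total l.size r.size with h | h
      · have h' : (l.size : ℝ) ≤ (r.size : ℝ) := by exact_mod_cast h
        rw [min_eq_left h', max_eq_right h']
        exact key_ineq c hc _ _ hl1 h' _ _ ihl ihr
      · have h' : (r.size : ℝ) ≤ (l.size : ℝ) := by exact_mod_cast h
        rw [min_eq_right h', max_eq_left h',
          show (l.size : ℝ) + r.size + 1 = (r.size : ℝ) + l.size + 1 by ring]
        have := key_ineq c hc _ _ hr1 h' _ _ ihr ihl
        linarith

/-- `S(n) ≤ 2c·n·log n` for every binary tree with `n ≥ 2` nodes. -/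
theorem stmt_10 (c : ℝ) (hc : 0 < c) (t : BT) (hn : 2 ≤ t.size) :
    t.cost c ≤ 2 * c * (t.size : ℝ) * logb 2 (t.size : ℝ) := by
  exact cost_le c hc t
end

section
/- For x a power of 2 with 2 ≤ x ≤ y, the sum over i from 0 to log(x/2) of 2^i · log(y/2^i) is at most x·log(2y/x) + x − 2. -/
open Real

lemma stmt_11_aux (L : ℝ) (k : ℕ) :
    ∑ i ∈ Finset.range k, (2 ^ i : ℝ) * (L - i) =
      L * (2 ^ k - 1) - (((k : ℝ) - 2) * 2 ^ k + 2) := by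
  induction k with
  | zero => simp
  | succ n ih => rw [Finset.sum_range_succ, ih]; push_cast; ring

/-- For `x = 2^k` a power of two with `2 ≤ x ≤ y`,
`∑_{i=0}^{log(x/2)} 2^i · log(y/2^i) ≤ x·log(2y/x) + x − 2` (log base 2). -/
theorem stmt_11 (k : ℕ) (hk : 1 ≤ k) (y : ℝ) (hy : (2 ^ k : ℝ) ≤ y) :
    (∑ i ∈ Finset.range k, (2 ^ i : ℝ) * logb 2 (y / 2 ^ i)) ≤
      (2 ^ k : ℝ) * logb 2 (2 * y / 2 ^ k) + 2 ^ k - 2 := by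
  have hy0 : (0:ℝ) < y := lt_of_lt_of_le (by positivity) hy
  set L := logb 2 y with hL
  have hterm : ∀ i : ℕ, logb 2 (y / 2 ^ i) = L - i := by
    intro i
    rw [Real.logb_div (ne_of_gt hy0) (by positivity)]
    simp [Real.logb_pow, hL]
  have hrhs : logb 2 (2 * y / 2 ^ k) = 1 + L - k := by
    rw [Real.logb_div (by positivity) (by positivity),
      Real.logb_mul (by norm_num) (ne_of_gt hy0)]
    simp [Real.logb_pow, hL]
  have hsum : (∑ i ∈ Finset.range k, (2 ^ i : ℝ) * logb 2 (y / 2 ^ i)) =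
      L * (2 ^ k - 1) - (((k : ℝ) - 2) * 2 ^ k + 2) := by
    rw [← stmt_11_aux L k]
    exact Finset.sum_congr rfl fun i _ => by rw [hterm i]
  have hL0 : (0:ℝ) ≤ L := by
    rw [hL]
    apply Real.logb_nonneg (by norm_num)
    calc (1:ℝ) ≤ 2 ^ k := one_le_pow₀ (by norm_num)
    _ ≤ y := hy
  rw [hsum, hrhs]
  nlinarith [pow_pos (show (0:ℝ) < 2 by norm_num) k]
end
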